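/- (Frequency nadir under the linear ramping PFR model) Let H, T_DB, T_G, T_E > 0 with T_G > T_E, let R_G > 0, R_E ≥ 0, and let p be the post-islanding power imbalance with R_E ≤ p ≤ R_E + R_G. Define the aggregate primary frequency response ΔP(τ) := ΔP_G(τ) + ΔP_E(τ), where ΔP_G(τ) = 0 for 0 ≤ τ < T_DB, ΔP_G(τ) = R_G·(τ − T_DB)/T_G for T_DB ≤ τ < T_G + T_DB, and ΔP_G(τ) = R_G for τ ≥ T_G + T_DB; and ΔP_E(τ) = R_E·τ/T_E for 0 ≤ τ < T_E and ΔP_E(τ) = R_E for τ ≥ T_E. Define the frequency deviation Δf(τ) := (1/(2H))·∫₀^τ (ΔP(s) − p) ds, and let τ* := T_DB + (p − R_E)·T_G/R_G. Assume T_E ≤ τ* (so τ* ∈ [T_E, T_G + T_DB]). Then: (i) Δf attains its minimum over [0, ∞) at τ = τ*; and (ii) Δf(τ*) = −(1/(2H))·[ (p − R_E)²·T_G/(2·R_G) + (p − R_E)·T_DB + R_E·T_E/2 ]. -/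

import Mathlib

open intervalIntegral

set_option maxHeartbeats 1000000 in
/-- Frequency nadir under the linear ramping PFR model: under the linear
ramping model of primary frequency response, with `R_E ≤ p ≤ R_E + R_G` and
`T_E ≤ τ* = T_DB + (p − R_E)·T_G/R_G`, the frequency deviation attains its minimum over
`[0,∞)` at `τ*`, with value
`−(1/(2H))·[(p−R_E)²·T_G/(2R_G) + (p−R_E)·T_DB + R_E·T_E/2]`. -/
theorem stmt_11 (H T_DB T_G T_E R_G R_E p : ℝ)
    (hH : 0 < H) (hTDB : 0 < T_DB) (hTG : 0 < T_G) (hTE : 0 < T_E) (hTGE : T_E < T_G)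
    (hRG : 0 < R_G) (hRE : 0 ≤ R_E) (hp1 : R_E ≤ p) (hp2 : p ≤ R_E + R_G)
    (ΔP : ℝ → ℝ)
    (hΔP : ∀ τ, ΔP τ =
      (if τ < T_DB then 0
       else if τ < T_G + T_DB then R_G * (τ - T_DB) / T_G
       else R_G)
      + (if τ < T_E then R_E * τ / T_E else R_E))
    (Δf : ℝ → ℝ)
    (hΔf : ∀ τ, Δf τ = (1 / (2 * H)) * ∫ s in (0:ℝ)..τ, (ΔP s - p))
    (τstar : ℝ) (hτstar : τstar = T_DB + (p - R_E) * T_G / R_G)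
    (hnadir : T_E ≤ τstar) :
    (∀ τ ∈ Set.Ici (0:ℝ), Δf τstar ≤ Δf τ) ∧
    Δf τstar = -(1 / (2 * H)) *
      ((p - R_E) ^ 2 * T_G / (2 * R_G) + (p - R_E) * T_DB + R_E * T_E / 2) := by
  have hRG' : R_G ≠ 0 := ne_of_gt hRG
  have hTG' : T_G ≠ 0 := ne_of_gt hTG
  have hTE' : T_E ≠ 0 := ne_of_gt hTE
  have hpR : 0 ≤ p - R_E := by linarith
  -- bounds on τstar
  have hτ1 : T_DB ≤ τstar := by
    rw [hτstar]; have : 0 ≤ (p - R_E) * T_G / R_G := by positivity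
    linarith
  have hτ2 : τstar ≤ T_G + T_DB := by
    rw [hτstar]
    have : (p - R_E) * T_G / R_G ≤ T_G := by
      rw [div_le_iff₀ hRG]; nlinarith
    linarith
  have hτ0 : 0 ≤ τstar := le_trans (le_of_lt hTDB) hτ1
  -- key algebraic fact
  have hkey : R_G * (τstar - T_DB) / T_G = p - R_E := by
    rw [hτstar]; field_simp; ring
  -- the two pieces
  set f1 : ℝ → ℝ := fun τ =>
    if τ < T_DB then 0 else if τ < T_G + T_DB then R_G * (τ - T_DB) / T_G else R_G with hf1
  set f2 : ℝ → ℝ := fun τ => if τ < T_E then R_E * τ / T_E else R_E with hf2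
  have hΔPD : ∀ τ, ΔP τ = f1 τ + f2 τ := hΔP
  have hrep1 : f1 = fun τ => R_G / T_G * max 0 (min (τ - T_DB) T_G) := by
    funext τ
    simp only [hf1]
    rcases lt_or_ge τ T_DB with h | h
    · rw [if_pos h, min_eq_left (by linarith), max_eq_left (by linarith), mul_zero]
    · rw [if_neg (not_lt.2 h)]
      rcases lt_or_ge τ (T_G + T_DB) with h2 | h2
      · rw [if_pos h2, min_eq_left (by linarith), max_eq_right (by linarith)]
        ring
      · rw [if_neg (not_lt.2 h2), min_eq_right (by linarith), max_eq_right (by linarith)]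
        field_simp
  have hmono1 : Monotone f1 := by
    rw [hrep1]
    have hsub : Monotone fun τ : ℝ => τ - T_DB := fun a b hab => sub_le_sub_right hab T_DB
    exact Monotone.const_mul (monotone_const.max (hsub.min monotone_const)) (by positivity)
  have hrep2 : f2 = fun τ => R_E / T_E * min τ T_E := by
    funext τ
    simp only [hf2]
    rcases lt_or_ge τ T_E with h | h
    · rw [if_pos h, min_eq_left (by linarith)]; ring
    · rw [if_neg (not_lt.2 h), min_eq_right (by linarith)]; field_simp
  have hmono2 : Monotone f2 := by
    rw [hrep2]
    exact Monotone.const_mul (monotone_id.min monotone_const) (by positivity)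
  have hmono : Monotone (fun τ => ΔP τ - p) := by
    intro a b hab
    simp only [hΔPD, sub_le_sub_iff_right]
    exact add_le_add (hmono1 hab) (hmono2 hab)
  have hInt : ∀ a b : ℝ, IntervalIntegrable (fun s => ΔP s - p) MeasureTheory.volume a b :=
    fun a b => (hmono.monotoneOn _).intervalIntegrable
  -- sign conditions
  have hle : ∀ s, 0 ≤ s → s ≤ τstar → ΔP s ≤ p := by
    intro s hs0 hs
    rw [hΔPD]
    simp only [hf1, hf2]
    have hramp : R_G * (s - T_DB) / T_G ≤ p - R_E := by
      rw [← hkey]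
      exact div_le_div_of_nonneg_right
        (mul_le_mul_of_nonneg_left (sub_le_sub_right hs _) (le_of_lt hRG)) (le_of_lt hTG)
    split_ifs with h1 h2 h3 h4 h5
    · have hE : R_E * s / T_E ≤ R_E := by rw [div_le_iff₀ hTE]; nlinarith
      linarith
    · linarith
    · have hE : R_E * s / T_E ≤ R_E := by rw [div_le_iff₀ hTE]; nlinarith
      linarith
    · linarith
    · have hE : R_E * s / T_E ≤ R_E := by rw [div_le_iff₀ hTE]; nlinarith
      have : R_G * (s - T_DB) / T_G ≤ p - R_E := hramp
      linarith
    · -- s ≥ T_G + T_DB, s ≤ τstar ≤ T_G + T_DB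
      have hs' : s = T_G + T_DB := le_antisymm (le_trans hs hτ2) (not_lt.1 h3)
      have : R_G * (s - T_DB) / T_G ≤ p - R_E := hramp
      rw [hs'] at this
      have h4 : R_G * (T_G + T_DB - T_DB) / T_G = R_G := by field_simp; ring
      rw [h4] at this
      linarith
  have hge : ∀ s, τstar ≤ s → p ≤ ΔP s := by
    intro s hs
    rw [hΔPD]
    simp only [hf1, hf2]
    have hramp : p - R_E ≤ R_G * (s - T_DB) / T_G := by
      rw [← hkey]
      exact div_le_div_of_nonneg_right
        (mul_le_mul_of_nonneg_left (sub_le_sub_right hs _) (le_of_lt hRG)) (le_of_lt hTG)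
    have hsE : ¬ s < T_E := not_lt.2 (le_trans hnadir hs)
    have hsDB : ¬ s < T_DB := not_lt.2 (le_trans hτ1 hs)
    rw [if_neg hsDB, if_neg hsE]
    rcases lt_or_ge s (T_G + T_DB) with h | h
    · rw [if_pos h]; linarith
    · rw [if_neg (not_lt.2 h)]
      have hramp2 : R_G * (s - T_DB) / T_G ≤ p - R_E → True := fun _ => trivial
      nlinarith
  constructor
  · -- minimality
    intro τ hτ
    have hτ' : (0:ℝ) ≤ τ := hτ
    have hadd : (∫ s in (0:ℝ)..τ, (ΔP s - p)) =
        (∫ s in (0:ℝ)..τstar, (ΔP s - p)) + ∫ s in τstar..τ, (ΔP s - p) :=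
      (integral_add_adjacent_intervals (hInt 0 τstar) (hInt τstar τ)).symm
    have hnn : 0 ≤ ∫ s in τstar..τ, (ΔP s - p) := by
      rcases le_total τstar τ with h | h
      · apply integral_nonneg h
        intro u hu
        exact sub_nonneg.2 (hge u hu.1)
      · rw [integral_symm]
        have h2 : (0:ℝ) ≤ ∫ s in τ..τstar, -(ΔP s - p) := by
          apply integral_nonneg h
          intro u hu
          simp only [neg_nonneg]
          exact sub_nonpos.2 (hle u (le_trans hτ' hu.1) hu.2)
        rw [integral_neg] at h2
        linarith
    rw [hΔf τ, hΔf τstar, hadd]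
    have hc : 0 < 1 / (2 * H) := by positivity
    nlinarith
  · -- value
    have hI1 : (∫ s in (0:ℝ)..τstar, f1 s) =
        R_G / T_G * ((τstar ^ 2 - T_DB ^ 2) / 2) - R_G / T_G * T_DB * (τstar - T_DB) := by
      have hsplit : (∫ s in (0:ℝ)..τstar, f1 s) =
          (∫ s in (0:ℝ)..T_DB, f1 s) + ∫ s in T_DB..τstar, f1 s :=
        (integral_add_adjacent_intervals ((hmono1.monotoneOn _).intervalIntegrable)
          ((hmono1.monotoneOn _).intervalIntegrable)).symm
      have e1 : (∫ s in (0:ℝ)..T_DB, f1 s) = 0 := by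
        have : (∫ s in (0:ℝ)..T_DB, f1 s) = ∫ s in (0:ℝ)..T_DB, (0:ℝ) := by
          apply integral_congr
          intro s hs
          rw [Set.uIcc_of_le (le_of_lt hTDB)] at hs
          simp only [hf1]
          rcases lt_or_eq_of_le hs.2 with h | h
          · rw [if_pos h]
          · rw [h, if_neg (lt_irrefl _), if_pos (by linarith)]
            simp
        rw [this, integral_zero]
      have e2 : (∫ s in T_DB..τstar, f1 s) =
          ∫ s in T_DB..τstar, (R_G / T_G * s - R_G / T_G * T_DB) := by
        apply integral_congr
        intro s hs
        rw [Set.uIcc_of_le hτ1] at hs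
        simp only [hf1]
        rw [if_neg (not_lt.2 hs.1)]
        rcases lt_or_ge s (T_G + T_DB) with h | h
        · rw [if_pos h]; ring
        · rw [if_neg (not_lt.2 h)]
          have : s = T_G + T_DB := le_antisymm (le_trans hs.2 hτ2) h
          rw [this]; field_simp; ring
      rw [hsplit, e1, e2, integral_sub (by
          exact (continuous_const.mul continuous_id).intervalIntegrable _ _)
          (intervalIntegrable_const), integral_const]
      have : (∫ s in T_DB..τstar, R_G / T_G * s) = R_G / T_G * ((τstar ^ 2 - T_DB ^ 2) / 2) := by
        rw [integral_const_mul, integral_id]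
      rw [this]
      simp only [smul_eq_mul]
      ring
    have hI2 : (∫ s in (0:ℝ)..τstar, f2 s) = R_E * T_E / 2 + R_E * (τstar - T_E) := by
      have hsplit : (∫ s in (0:ℝ)..τstar, f2 s) =
          (∫ s in (0:ℝ)..T_E, f2 s) + ∫ s in T_E..τstar, f2 s :=
        (integral_add_adjacent_intervals ((hmono2.monotoneOn _).intervalIntegrable)
          ((hmono2.monotoneOn _).intervalIntegrable)).symm
      have e1 : (∫ s in (0:ℝ)..T_E, f2 s) = R_E * T_E / 2 := by
        have : (∫ s in (0:ℝ)..T_E, f2 s) = ∫ s in (0:ℝ)..T_E, (R_E / T_E * s) := by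
          apply integral_congr
          intro s hs
          rw [Set.uIcc_of_le (le_of_lt hTE)] at hs
          simp only [hf2]
          rcases lt_or_eq_of_le hs.2 with h | h
          · rw [if_pos h]; ring
          · rw [h, if_neg (lt_irrefl _)]; field_simp
        rw [this, integral_const_mul, integral_id]
        field_simp
        ring
      have e2 : (∫ s in T_E..τstar, f2 s) = R_E * (τstar - T_E) := by
        have : (∫ s in T_E..τstar, f2 s) = ∫ s in T_E..τstar, R_E := by
          apply integral_congr
          intro s hs
          rw [Set.uIcc_of_le hnadir] at hs
          simp only [hf2]
          rw [if_neg (not_lt.2 hs.1)]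
        rw [this, integral_const]
        simp [mul_comm]
      rw [hsplit, e1, e2]
    have hIadd : (∫ s in (0:ℝ)..τstar, (ΔP s - p)) =
        (∫ s in (0:ℝ)..τstar, f1 s) + (∫ s in (0:ℝ)..τstar, f2 s) - p * τstar := by
      have h1 : (∫ s in (0:ℝ)..τstar, (ΔP s - p)) =
          (∫ s in (0:ℝ)..τstar, (f1 s + f2 s)) - ∫ s in (0:ℝ)..τstar, (p:ℝ) := by
        rw [← integral_sub (IntervalIntegrable.add
            ((hmono1.monotoneOn _).intervalIntegrable)
            ((hmono2.monotoneOn _).intervalIntegrable)) intervalIntegrable_const]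
        apply integral_congr
        intro s _
        simp only [hΔPD]
      rw [h1, integral_add ((hmono1.monotoneOn _).intervalIntegrable)
        ((hmono2.monotoneOn _).intervalIntegrable), integral_const]
      simp only [smul_eq_mul, sub_zero]
      ring
    rw [hΔf τstar, hIadd, hI1, hI2, hτstar]
    field_simp
    ring
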